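/- Skew Boolean algebras are locally finite: if S is a skew Boolean algebra generated by a finite subset X, then S is finite. -/

import Mathlib

universe u

/-- A skew Boolean algebra. -/
class SBA (S : Type u) where
  wedge : S → S → S
  vee : S → S → S
  diff : S → S → S
  zero : S
  wedge_assoc : ∀ x y z : S, wedge (wedge x y) z = wedge x (wedge y z)
  vee_assoc : ∀ x y z : S, vee (vee x y) z = vee x (vee y z)
  absorb1 : ∀ x y : S, wedge x (vee x y) = x
  absorb2 : ∀ x y : S, wedge (vee y x) x = x
  absorb3 : ∀ x y : S, vee x (wedge x y) = x
  absorb4 : ∀ x y : S, vee (wedge y x) x = x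
  sdistrib1 : ∀ x y z : S, wedge x (vee y z) = vee (wedge x y) (wedge x z)
  sdistrib2 : ∀ x y z : S, wedge (vee x y) z = vee (wedge x z) (wedge y z)
  zero_wedge : ∀ x : S, wedge zero x = zero
  wedge_zero : ∀ x : S, wedge x zero = zero
  zero_vee : ∀ x : S, vee zero x = x
  vee_zero : ∀ x : S, vee x zero = x
  diff_ax1 : ∀ x y : S, vee (wedge (wedge x y) x) (diff x y) = x
  diff_ax2 : ∀ x y : S, wedge (wedge (wedge x y) x) (diff x y) = zero
  diff_ax3 : ∀ x y : S, wedge (diff x y) (wedge (wedge x y) x) = zero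

namespace SBA

scoped infixl:70 " ⋏ " => SBA.wedge
scoped infixl:65 " ⋎ " => SBA.vee
scoped infixl:70 " ∖ " => SBA.diff

variable {S : Type u} [SBA S]

/-- Green's relation `D`: `x D y` iff `x⋏y⋏x = x` and `y⋏x⋏y = y`. -/
def Drel (x y : S) : Prop := x ⋏ y ⋏ x = x ∧ y ⋏ x ⋏ y = y

/-- The natural partial order: `x ≤ y` iff `x⋏y = x = y⋏x`. -/
def nle (x y : S) : Prop := x ⋏ y = x ∧ y ⋏ x = x

/-- An atom: a nonzero element with nothing strictly between it and `0`. -/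
def IsAtom (a : S) : Prop := a ≠ zero ∧ ∀ x : S, nle x a → x = zero ∨ x = a

/-- `X` generates `S`: the only subset of `S` containing `X` and `0` and closed
under the three operations is `S` itself. -/
def Generates (X : Set S) : Prop :=
  ∀ T : Set S, X ⊆ T → zero ∈ T →
    (∀ a b : S, a ∈ T → b ∈ T → a ⋏ b ∈ T ∧ a ⋎ b ∈ T ∧ a ∖ b ∈ T) →
    T = Set.univ

/-- A homomorphism of skew Boolean algebras. -/
def IsHom {T : Type u} [SBA T] (f : S → T) : Prop :=
  (∀ a b : S, f (a ⋏ b) = f a ⋏ f b) ∧ (∀ a b : S, f (a ⋎ b) = f a ⋎ f b) ∧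
    (∀ a b : S, f (a ∖ b) = f a ∖ f b) ∧ f zero = zero

end SBA

open SBA

/-- A left-handed skew Boolean algebra. -/
class LeftHanded (S : Type u) [SBA S] : Prop where
  lh_wedge : ∀ x y : S, x ⋏ y ⋏ x = x ⋏ y
  lh_vee : ∀ x y : S, x ⋎ y ⋎ x = y ⋎ x

/-- `S` is freely generated by `X` over the variety of all skew Boolean algebras. -/
def FreelyGenerates (S : Type u) [SBA S] (X : Set S) : Prop :=
  Generates X ∧
    ∀ (T : Type u) [SBA T], ∀ g : X → T,
      ∃ f : S → T, IsHom f ∧ ∀ x : X, f x = g x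

/-- `S` is freely generated by `X` over the variety of left-handed skew Boolean algebras. -/
def LFreelyGenerates (S : Type u) [SBA S] [LeftHanded S] (X : Set S) : Prop :=
  Generates X ∧
    ∀ (T : Type u) [SBA T] [LeftHanded T], ∀ g : X → T,
      ∃ f : S → T, IsHom f ∧ ∀ x : X, f x = g x

namespace SBAFin
open SBA

variable {S : Type u} [SBA S]

theorem mi (x : S) : x ⋏ x = x := by
  have h := absorb1 x (x ⋏ x)
  rwa [absorb3] at h

theorem ji (x : S) : x ⋎ x = x := by
  have h := absorb3 x (x ⋎ x)
  rwa [absorb1] at h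

theorem dle1 (x y : S) : (x ∖ y) ⋏ x = x ∖ y := by
  conv_lhs => arg 2; rw [← diff_ax1 x y]
  rw [sdistrib1, diff_ax3, mi, zero_vee]

theorem dle2 (x y : S) : x ⋏ (x ∖ y) = x ∖ y := by
  conv_lhs => arg 1; rw [← diff_ax1 x y]
  rw [sdistrib2, diff_ax2, mi, zero_vee]

/-- K-lemma, left: `v ⋏ (u ∖ v) = zero`. -/
theorem K1 (u v : S) : v ⋏ (u ∖ v) = zero := by
  have h1 : (u ⋏ v) ⋏ (u ∖ v) = zero := by
    have h := diff_ax2 u v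
    rwa [wedge_assoc, dle2] at h
  have hut : u ⋏ (v ⋏ (u ∖ v)) = zero := by rw [← wedge_assoc]; exact h1
  have htu : (v ⋏ (u ∖ v)) ⋏ u = v ⋏ (u ∖ v) := by rw [wedge_assoc, dle1]
  calc v ⋏ (u ∖ v) = (v ⋏ (u ∖ v)) ⋏ (v ⋏ (u ∖ v)) := (mi _).symm
    _ = ((v ⋏ (u ∖ v)) ⋏ u) ⋏ (v ⋏ (u ∖ v)) := by rw [htu]
    _ = (v ⋏ (u ∖ v)) ⋏ (u ⋏ (v ⋏ (u ∖ v))) := by rw [wedge_assoc]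
    _ = (v ⋏ (u ∖ v)) ⋏ zero := by rw [hut]
    _ = zero := wedge_zero _

/-- K-lemma, right: `(u ∖ v) ⋏ v = zero`. -/
theorem K2 (u v : S) : (u ∖ v) ⋏ v = zero := by
  calc (u ∖ v) ⋏ v = ((u ∖ v) ⋏ v) ⋏ ((u ∖ v) ⋏ v) := (mi _).symm
    _ = (u ∖ v) ⋏ ((v ⋏ (u ∖ v)) ⋏ v) := by simp only [wedge_assoc]
    _ = (u ∖ v) ⋏ (zero ⋏ v) := by rw [K1]
    _ = zero := by rw [zero_wedge, wedge_zero]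

theorem diff_self_zero {x y : S} (h : (x ⋏ y) ⋏ x = x) : x ∖ y = zero := by
  have h2 := diff_ax2 x y
  rw [h] at h2
  rw [← dle2 x y, h2]

theorem zero_diff (y : S) : (zero : S) ∖ y = zero := by
  have h := dle2 (zero : S) y
  rw [zero_wedge] at h
  exact h.symm

theorem diff_eq_of {x y d : S} (h1 : ((x ⋏ y) ⋏ x) ⋎ d = x)
    (h2 : ((x ⋏ y) ⋏ x) ⋏ d = zero) : x ∖ y = d := by
  have hxd : x ⋏ d = d := by
    conv_lhs => arg 1; rw [← h1]
    rw [sdistrib2, h2, mi, zero_vee]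
  have hv1 : x ∖ y = (x ∖ y) ⋏ d := by
    calc x ∖ y = (x ∖ y) ⋏ x := (dle1 x y).symm
      _ = (x ∖ y) ⋏ (((x ⋏ y) ⋏ x) ⋎ d) := by rw [h1]
      _ = (x ∖ y) ⋏ ((x ⋏ y) ⋏ x) ⋎ (x ∖ y) ⋏ d := by rw [sdistrib1]
      _ = (x ∖ y) ⋏ d := by rw [diff_ax3, zero_vee]
  have hd1 : d = (x ∖ y) ⋏ d := by
    calc d = x ⋏ d := hxd.symm
      _ = (((x ⋏ y) ⋏ x) ⋎ (x ∖ y)) ⋏ d := by rw [diff_ax1]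
      _ = ((x ⋏ y) ⋏ x) ⋏ d ⋎ (x ∖ y) ⋏ d := by rw [sdistrib2]
      _ = (x ∖ y) ⋏ d := by rw [h2, zero_vee]
  rw [hv1, ← hd1]

/-- Orthogonal elements have commuting joins. -/
theorem Ocomm {a b : S} (h1 : a ⋏ b = zero) (h2 : b ⋏ a = zero) : a ⋎ b = b ⋎ a := by
  have hxb : (a ⋎ b) ⋏ b = b := by rw [sdistrib2, h1, mi, zero_vee]
  have hbx : b ⋏ (a ⋎ b) = b := by rw [sdistrib1, h2, mi, zero_vee]
  have hm : ((a ⋎ b) ⋏ b) ⋏ (a ⋎ b) = b := by rw [hxb, hbx]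
  have h3 : b ⋎ ((a ⋎ b) ∖ b) = a ⋎ b := by have := diff_ax1 (a ⋎ b) b; rwa [hm] at this
  have h4 : b ⋏ ((a ⋎ b) ∖ b) = zero := by have := diff_ax2 (a ⋎ b) b; rwa [hm] at this
  have h5 : (a ⋎ b) ∖ b = a ⋏ ((a ⋎ b) ∖ b) := by
    conv_lhs => rw [← dle2 (a ⋎ b) b]
    rw [sdistrib2, h4, vee_zero]
  have h6 : a = a ⋏ ((a ⋎ b) ∖ b) := by
    conv_lhs => rw [← absorb1 a b]
    conv_lhs => arg 2; rw [← h3]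
    rw [sdistrib1, h1, zero_vee]
  have h7 : (a ⋎ b) ∖ b = a := by rw [h5, ← h6]
  rw [← h3, h7]

/-- Orthogonality is inherited downwards. -/
theorem DISJ {w x d : S} (h : (w ⋏ x) ⋏ w = w) (h1 : x ⋏ d = zero) (h2 : d ⋏ x = zero) :
    d ⋏ w = zero ∧ w ⋏ d = zero := by
  have hs : (d ⋏ w) ⋏ x = zero := by
    have hsq : ((d ⋏ w) ⋏ x) ⋏ ((d ⋏ w) ⋏ x) = zero := by
      calc ((d ⋏ w) ⋏ x) ⋏ ((d ⋏ w) ⋏ x)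
          = (d ⋏ w) ⋏ ((x ⋏ d) ⋏ (w ⋏ x)) := by simp only [wedge_assoc]
        _ = zero := by rw [h1, zero_wedge, wedge_zero]
    rwa [mi] at hsq
  have hdw : d ⋏ w = zero := by
    calc d ⋏ w = d ⋏ ((w ⋏ x) ⋏ w) := by rw [h]
      _ = ((d ⋏ w) ⋏ x) ⋏ w := by simp only [wedge_assoc]
      _ = zero := by rw [hs, zero_wedge]
  refine ⟨hdw, ?_⟩
  have hsq : (w ⋏ d) ⋏ (w ⋏ d) = zero := by
    calc (w ⋏ d) ⋏ (w ⋏ d) = w ⋏ ((d ⋏ w) ⋏ d) := by simp only [wedge_assoc]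
      _ = zero := by rw [hdw, zero_wedge, wedge_zero]
  rwa [mi] at hsq

/-- Meet commutativity below a common element. -/
theorem mcomm {u v z : S} (hu1 : u ⋏ z = u) (hu2 : z ⋏ u = u)
    (hv1 : v ⋏ z = v) (hv2 : z ⋏ v = v) : u ⋏ v = v ⋏ u := by
  have hm : (z ⋏ u) ⋏ z = u := by rw [hu2, hu1]
  have hc1 : u ⋎ (z ∖ u) = z := by have := diff_ax1 z u; rwa [hm] at this
  have hc2 : u ⋏ (z ∖ u) = zero := by have := diff_ax2 z u; rwa [hm] at this
  have hc3 : (z ∖ u) ⋏ u = zero := by have := diff_ax3 z u; rwa [hm] at this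
  have t0 : (u ⋏ v) ⋏ (z ∖ u) = zero := by
    have hsq : ((u ⋏ v) ⋏ (z ∖ u)) ⋏ ((u ⋏ v) ⋏ (z ∖ u)) = zero := by
      calc ((u ⋏ v) ⋏ (z ∖ u)) ⋏ ((u ⋏ v) ⋏ (z ∖ u))
          = (u ⋏ v) ⋏ (((z ∖ u) ⋏ u) ⋏ (v ⋏ (z ∖ u))) := by simp only [wedge_assoc]
        _ = zero := by rw [hc3, zero_wedge, wedge_zero]
    rwa [mi] at hsq
  have hsplit1 : v = (v ⋏ u) ⋎ (v ⋏ (z ∖ u)) := by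
    conv_lhs => rw [← hv1]
    conv_lhs => arg 2; rw [← hc1]
    rw [sdistrib1]
  have huv : u ⋏ v = (u ⋏ v) ⋏ u := by
    conv_lhs => arg 2; rw [hsplit1]
    rw [sdistrib1, ← wedge_assoc, ← wedge_assoc, t0, vee_zero]
  have hsplit2 : v = (u ⋏ v) ⋎ ((z ∖ u) ⋏ v) := by
    conv_lhs => rw [← hv2]
    conv_lhs => arg 1; rw [← hc1]
    rw [sdistrib2]
  have t1 : ((z ∖ u) ⋏ v) ⋏ u = zero := by
    have hsq : (((z ∖ u) ⋏ v) ⋏ u) ⋏ (((z ∖ u) ⋏ v) ⋏ u) = zero := by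
      calc (((z ∖ u) ⋏ v) ⋏ u) ⋏ (((z ∖ u) ⋏ v) ⋏ u)
          = ((z ∖ u) ⋏ v) ⋏ ((u ⋏ (z ∖ u)) ⋏ (v ⋏ u)) := by simp only [wedge_assoc]
        _ = zero := by rw [hc2, zero_wedge, wedge_zero]
    rwa [mi] at hsq
  calc u ⋏ v = (u ⋏ v) ⋏ u := huv
    _ = (u ⋏ v) ⋏ u ⋎ zero := (vee_zero _).symm
    _ = (u ⋏ v) ⋏ u ⋎ ((z ∖ u) ⋏ v) ⋏ u := by rw [t1]
    _ = ((u ⋏ v) ⋎ ((z ∖ u) ⋏ v)) ⋏ u := (sdistrib2 _ _ _).symm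
    _ = v ⋏ u := by rw [← hsplit2]

/-- D-related elements: join is reversed meet. -/
theorem Jlem {a b : S} (h1 : (a ⋏ b) ⋏ a = a) (h2 : (b ⋏ a) ⋏ b = b) :
    a ⋎ b = b ⋏ a := by
  have e2 : (a ⋎ b) ⋎ (b ⋏ a) = a ⋎ b := by rw [vee_assoc, absorb3]
  have e3 : (a ⋎ b) ⋏ (b ⋏ a) = b ⋏ a := by
    have := absorb2 (b ⋏ a) (a ⋎ b); rwa [e2] at this
  have e4 : (a ⋎ b) ⋏ (b ⋏ a) = a ⋎ (b ⋏ a) := by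
    rw [sdistrib2, ← wedge_assoc, ← wedge_assoc, h1, mi]
  have e5 : a ⋎ (b ⋏ a) = b ⋏ a := by rw [← e4, e3]
  have e7 : (b ⋏ a) ⋎ b = b ⋏ a := by
    have h6 : (b ⋏ a) ⋏ b = b := h2
    have := absorb3 (b ⋏ a) b
    rwa [h6] at this
  have hbs : b ⋏ (a ⋎ b) = (b ⋏ a) := by rw [sdistrib1, mi, e7]
  calc a ⋎ b = (a ⋎ b) ⋏ (a ⋎ b) := (mi _).symm
    _ = a ⋏ (a ⋎ b) ⋎ b ⋏ (a ⋎ b) := by rw [sdistrib2]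
    _ = a ⋎ (b ⋏ a) := by rw [absorb1, hbs]
    _ = b ⋏ a := e5

theorem jcomm_aux {p q x : S} (hp1 : p ⋏ x = p) (hp2 : x ⋏ p = p)
    (hq1 : q ⋏ x = q) (hq2 : x ⋏ q = q) :
    p ⋎ q = (p ⋏ q) ⋎ ((q ∖ p) ⋎ (p ∖ q)) := by
  have hcomm : p ⋏ q = q ⋏ p := mcomm hp1 hp2 hq1 hq2
  have hpqp : (p ⋏ q) ⋏ p = p ⋏ q := by
    rw [wedge_assoc, ← hcomm, ← wedge_assoc, mi]
  have hps : (p ⋏ q) ⋎ (p ∖ q) = p := by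
    have := diff_ax1 p q; rwa [hpqp] at this
  have hqpq : (q ⋏ p) ⋏ q = q ⋏ p := by
    rw [wedge_assoc, hcomm, ← wedge_assoc, mi]
  have hqs : (p ⋏ q) ⋎ (q ∖ p) = q := by
    have := diff_ax1 q p; rwa [hqpq, ← hcomm] at this
  calc p ⋎ q = ((p ⋏ q) ⋎ (p ∖ q)) ⋎ q := by rw [hps]
    _ = (p ⋏ q) ⋎ ((p ∖ q) ⋎ q) := by rw [vee_assoc]
    _ = (p ⋏ q) ⋎ (q ⋎ (p ∖ q)) := by rw [Ocomm (K2 p q) (K1 p q)]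
    _ = ((p ⋏ q) ⋎ q) ⋎ (p ∖ q) := by rw [vee_assoc]
    _ = ((p ⋏ q) ⋎ (q ∖ p)) ⋎ (p ∖ q) := by
        conv_lhs => arg 1; rw [absorb4, ← hqs]
    _ = (p ⋏ q) ⋎ ((q ∖ p) ⋎ (p ∖ q)) := by rw [vee_assoc]

/-- Join commutativity below a common element. -/
theorem jcomm {p q x : S} (hp1 : p ⋏ x = p) (hp2 : x ⋏ p = p)
    (hq1 : q ⋏ x = q) (hq2 : x ⋏ q = q) : p ⋎ q = q ⋎ p := by
  have hcomm : p ⋏ q = q ⋏ p := mcomm hp1 hp2 hq1 hq2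
  have hd : (q ∖ p) ⋏ (p ∖ q) = zero ∧ (p ∖ q) ⋏ (q ∖ p) = zero := by
    refine DISJ (w := p ∖ q) (x := p) (d := q ∖ p) ?_ (K1 q p) (K2 q p)
    rw [dle1, mi]
  rw [jcomm_aux hp1 hp2 hq1 hq2, jcomm_aux hq1 hq2 hp1 hp2,
    hcomm, Ocomm hd.1 hd.2]

theorem w6 (a b : S) : ((a ⋏ b) ⋏ a) ⋏ ((b ⋏ a) ⋏ b) = a ⋏ b := by
  calc ((a ⋏ b) ⋏ a) ⋏ ((b ⋏ a) ⋏ b) = ((a ⋏ b) ⋏ (a ⋏ b)) ⋏ (a ⋏ b) := by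
        simp only [wedge_assoc]
    _ = a ⋏ b := by rw [mi, mi]

theorem dD (a b : S) : (((a ⋏ b) ⋏ a) ⋏ ((b ⋏ a) ⋏ b)) ⋏ ((a ⋏ b) ⋏ a) = (a ⋏ b) ⋏ a := by
  rw [w6, ← wedge_assoc (a ⋏ b) (a ⋏ b) a, mi]

theorem sand_half (x a b : S) :
    ((x ⋏ a) ⋏ b) ⋏ x = ((x ⋏ ((b ⋏ a) ⋏ b)) ⋏ x) ⋎ ((x ⋏ ((a ⋏ b) ⋏ a)) ⋏ x) := by
  have s1 : ((x ⋏ a) ⋏ b) ⋏ x = ((x ⋏ ((a ⋏ b) ⋏ a)) ⋏ b) ⋏ x := by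
    have ha : x ⋏ a = (x ⋏ ((a ⋏ b) ⋏ a)) ⋎ (x ⋏ (a ∖ b)) := by
      conv_lhs => arg 2; rw [← diff_ax1 a b]
      rw [sdistrib1]
    have hz : (x ⋏ (a ∖ b)) ⋏ b = zero := by
      rw [wedge_assoc, K2, wedge_zero]
    rw [ha, sdistrib2, hz, vee_zero]
  have s2 : ((x ⋏ ((a ⋏ b) ⋏ a)) ⋏ b) ⋏ x
      = ((x ⋏ ((a ⋏ b) ⋏ a)) ⋏ ((b ⋏ a) ⋏ b)) ⋏ x := by
    have hb : (x ⋏ ((a ⋏ b) ⋏ a)) ⋏ b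
        = ((x ⋏ ((a ⋏ b) ⋏ a)) ⋏ ((b ⋏ a) ⋏ b)) ⋎ ((x ⋏ ((a ⋏ b) ⋏ a)) ⋏ (b ∖ a)) := by
      conv_lhs => arg 2; rw [← diff_ax1 b a]
      rw [sdistrib1]
    have hz2 : (x ⋏ ((a ⋏ b) ⋏ a)) ⋏ (b ∖ a) = zero := by
      calc (x ⋏ ((a ⋏ b) ⋏ a)) ⋏ (b ∖ a)
          = (x ⋏ (a ⋏ b)) ⋏ (a ⋏ (b ∖ a)) := by simp only [wedge_assoc]
        _ = zero := by rw [K1, wedge_zero]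
    rw [hb, hz2, vee_zero]
  have s7 : ((b ⋏ a) ⋏ b) ⋎ ((a ⋏ b) ⋏ a) = ((a ⋏ b) ⋏ a) ⋏ ((b ⋏ a) ⋏ b) :=
    Jlem (dD b a) (dD a b)
  calc ((x ⋏ a) ⋏ b) ⋏ x = ((x ⋏ ((a ⋏ b) ⋏ a)) ⋏ ((b ⋏ a) ⋏ b)) ⋏ x := by rw [s1, s2]
    _ = (x ⋏ (((a ⋏ b) ⋏ a) ⋏ ((b ⋏ a) ⋏ b))) ⋏ x := by
        rw [wedge_assoc x ((a ⋏ b) ⋏ a) ((b ⋏ a) ⋏ b)]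
    _ = (x ⋏ (((b ⋏ a) ⋏ b) ⋎ ((a ⋏ b) ⋏ a))) ⋏ x := by rw [s7]
    _ = ((x ⋏ ((b ⋏ a) ⋏ b)) ⋎ (x ⋏ ((a ⋏ b) ⋏ a))) ⋏ x := by rw [sdistrib1]
    _ = ((x ⋏ ((b ⋏ a) ⋏ b)) ⋏ x) ⋎ ((x ⋏ ((a ⋏ b) ⋏ a)) ⋏ x) := by rw [sdistrib2]

/-- The sandwich commutation theorem. -/
theorem sand (x a b : S) : ((x ⋏ a) ⋏ b) ⋏ x = ((x ⋏ b) ⋏ a) ⋏ x := by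
  have hp1 : ((x ⋏ ((b ⋏ a) ⋏ b)) ⋏ x) ⋏ x = (x ⋏ ((b ⋏ a) ⋏ b)) ⋏ x := by
    rw [wedge_assoc ((x ⋏ ((b ⋏ a) ⋏ b))) x x, mi]
  have hp2 : x ⋏ ((x ⋏ ((b ⋏ a) ⋏ b)) ⋏ x) = (x ⋏ ((b ⋏ a) ⋏ b)) ⋏ x := by
    calc x ⋏ ((x ⋏ ((b ⋏ a) ⋏ b)) ⋏ x) = ((x ⋏ x) ⋏ ((b ⋏ a) ⋏ b)) ⋏ x := by
          simp only [wedge_assoc]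
      _ = (x ⋏ ((b ⋏ a) ⋏ b)) ⋏ x := by rw [mi]
  have hq1 : ((x ⋏ ((a ⋏ b) ⋏ a)) ⋏ x) ⋏ x = (x ⋏ ((a ⋏ b) ⋏ a)) ⋏ x := by
    rw [wedge_assoc ((x ⋏ ((a ⋏ b) ⋏ a))) x x, mi]
  have hq2 : x ⋏ ((x ⋏ ((a ⋏ b) ⋏ a)) ⋏ x) = (x ⋏ ((a ⋏ b) ⋏ a)) ⋏ x := by
    calc x ⋏ ((x ⋏ ((a ⋏ b) ⋏ a)) ⋏ x) = ((x ⋏ x) ⋏ ((a ⋏ b) ⋏ a)) ⋏ x := by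
          simp only [wedge_assoc]
      _ = (x ⋏ ((a ⋏ b) ⋏ a)) ⋏ x := by rw [mi]
  rw [sand_half x a b, sand_half x b a, jcomm hp1 hp2 hq1 hq2]

/-- Absorption of a sandwiched element. -/
theorem gs2 {m c : S} (hc : (m ⋏ c) ⋏ m = m) (a : S) :
    ((m ⋏ a) ⋏ c) ⋏ m = (m ⋏ a) ⋏ m := by
  have h := sand m (c ⋏ m) a
  have hL : (m ⋏ (c ⋏ m)) ⋏ a = m ⋏ a := by rw [← wedge_assoc, hc]
  rw [hL] at h
  have hR : ((m ⋏ a) ⋏ (c ⋏ m)) ⋏ m = ((m ⋏ a) ⋏ c) ⋏ m := by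
    calc ((m ⋏ a) ⋏ (c ⋏ m)) ⋏ m = ((m ⋏ a) ⋏ c) ⋏ (m ⋏ m) := by
          simp only [wedge_assoc]
      _ = ((m ⋏ a) ⋏ c) ⋏ m := by rw [mi]
  rw [hR] at h
  exact h.symm

theorem gs {m a b : S} (ha : (m ⋏ a) ⋏ m = m) (hb : (m ⋏ b) ⋏ m = m) :
    (m ⋏ (a ⋏ b)) ⋏ m = m := by
  rw [← wedge_assoc, gs2 hb, ha]

/-- Rectangular collapse for pairwise D-related elements. -/
theorem rect3 {a b c : S} (hab : (a ⋏ b) ⋏ a = a) (hac : (a ⋏ c) ⋏ a = a)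
    (hca : (c ⋏ a) ⋏ c = c) : (a ⋏ b) ⋏ c = a ⋏ c := by
  have h1 : (a ⋏ (b ⋏ c)) ⋏ a = a := gs hab hac
  calc (a ⋏ b) ⋏ c = (a ⋏ b) ⋏ ((c ⋏ a) ⋏ c) := by rw [hca]
    _ = ((a ⋏ (b ⋏ c)) ⋏ a) ⋏ c := by simp only [wedge_assoc]
    _ = a ⋏ c := by rw [h1]

/-! ### Finite joins of lists -/

def jn : List S → S
  | [] => zero
  | a :: t => a ⋎ jn t

@[simp] theorem jn_nil : jn ([] : List S) = zero := rfl
@[simp] theorem jn_cons (a : S) (t : List S) : jn (a :: t) = a ⋎ jn t := rfl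

theorem jn_append (l₁ l₂ : List S) : jn (l₁ ++ l₂) = jn l₁ ⋎ jn l₂ := by
  induction l₁ with
  | nil => simp [zero_vee]
  | cons a t ih => simp only [List.cons_append, jn_cons, ih, vee_assoc]

theorem jn_zeros {l : List S} (h : ∀ a ∈ l, a = zero) : jn l = zero := by
  induction l with
  | nil => rfl
  | cons a t ih =>
    rw [jn_cons, h a (List.mem_cons_self (a := a) (l := t)), zero_vee]
    exact ih fun b hb => h b (List.mem_cons_of_mem a hb)

theorem wedge_jn (a : S) (l : List S) : a ⋏ jn l = jn (l.map (a ⋏ ·)) := by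
  induction l with
  | nil => exact wedge_zero a
  | cons b t ih => rw [jn_cons, sdistrib1, ih]; rfl

theorem jn_wedge (l : List S) (a : S) : jn l ⋏ a = jn (l.map (· ⋏ a)) := by
  induction l with
  | nil => exact zero_wedge a
  | cons b t ih => rw [jn_cons, sdistrib2, ih]; rfl

theorem jn_single {α : Type} {l : List α} (F : α → S) (hnd : l.Nodup) {a : α}
    (ha : a ∈ l) (h0 : ∀ b ∈ l, b ≠ a → F b = zero) : jn (l.map F) = F a := by
  induction l with
  | nil => cases ha
  | cons c t ih =>
    have hct := List.nodup_cons.mp hnd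
    by_cases hca : c = a
    · subst hca
      have : jn (t.map F) = zero := by
        apply jn_zeros
        intro s hs
        obtain ⟨b, hb, rfl⟩ := List.mem_map.mp hs
        exact h0 b (List.mem_cons_of_mem c hb) (fun h => hct.1 (h ▸ hb))
      rw [List.map_cons, jn_cons, this, vee_zero]
    · have hat : a ∈ t := by
        rcases List.mem_cons.mp ha with h | h
        · exact absurd h.symm hca
        · exact h
      rw [List.map_cons, jn_cons, h0 c (List.mem_cons_self (a := c) (l := t)) hca, zero_vee]
      exact ih hct.2 hat fun b hb => h0 b (List.mem_cons_of_mem c hb)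

theorem jn_map_wedge {α : Type} {l : List α} (hnd : l.Nodup) (F G : α → S)
    (hFG : ∀ a ∈ l, ∀ b ∈ l, a ≠ b → F a ⋏ G b = zero) :
    jn (l.map F) ⋏ jn (l.map G) = jn (l.map fun a => F a ⋏ G a) := by
  induction l with
  | nil => exact zero_wedge _
  | cons a t ih =>
    have hct := List.nodup_cons.mp hnd
    have hFjnG : F a ⋏ jn (t.map G) = zero := by
      rw [wedge_jn, List.map_map]
      apply jn_zeros
      intro s hs
      obtain ⟨b, hb, rfl⟩ := List.mem_map.mp hs
      exact hFG a (List.mem_cons_self (a := a) (l := t)) b (List.mem_cons_of_mem a hb)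
        (fun h => hct.1 (h ▸ hb))
    have hjnFG : jn (t.map F) ⋏ G a = zero := by
      rw [jn_wedge, List.map_map]
      apply jn_zeros
      intro s hs
      obtain ⟨b, hb, rfl⟩ := List.mem_map.mp hs
      exact hFG b (List.mem_cons_of_mem a hb) a (List.mem_cons_self (a := a) (l := t))
        (fun h => hct.1 (h ▸ hb))
    have ih' := ih hct.2 fun b hb c hc => hFG b (List.mem_cons_of_mem a hb) c
      (List.mem_cons_of_mem a hc)
    calc jn ((a :: t).map F) ⋏ jn ((a :: t).map G)
        = (F a ⋎ jn (t.map F)) ⋏ (G a ⋎ jn (t.map G)) := rfl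
      _ = F a ⋏ (G a ⋎ jn (t.map G)) ⋎ jn (t.map F) ⋏ (G a ⋎ jn (t.map G)) := by
          rw [sdistrib2]
      _ = (F a ⋏ G a ⋎ F a ⋏ jn (t.map G)) ⋎
            (jn (t.map F) ⋏ G a ⋎ jn (t.map F) ⋏ jn (t.map G)) := by
          rw [sdistrib1, sdistrib1]
      _ = F a ⋏ G a ⋎ jn (t.map fun b => F b ⋏ G b) := by
          rw [hFjnG, hjnFG, vee_zero, zero_vee, ih']
      _ = jn ((a :: t).map fun b => F b ⋏ G b) := rfl

theorem jn_map_vee {α : Type} {l : List α} (hnd : l.Nodup) (F G : α → S)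
    (hFG : ∀ a ∈ l, ∀ b ∈ l, a ≠ b → F a ⋏ G b = zero)
    (hGF : ∀ a ∈ l, ∀ b ∈ l, a ≠ b → G a ⋏ F b = zero) :
    jn (l.map F) ⋎ jn (l.map G) = jn (l.map fun a => F a ⋎ G a) := by
  induction l with
  | nil => exact zero_vee _
  | cons a t ih =>
    have hct := List.nodup_cons.mp hnd
    have h1 : jn (t.map F) ⋏ G a = zero := by
      rw [jn_wedge, List.map_map]
      apply jn_zeros
      intro s hs
      obtain ⟨b, hb, rfl⟩ := List.mem_map.mp hs
      exact hFG b (List.mem_cons_of_mem a hb) a (List.mem_cons_self (a := a) (l := t))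
        (fun h => hct.1 (h ▸ hb))
    have h2 : G a ⋏ jn (t.map F) = zero := by
      rw [wedge_jn, List.map_map]
      apply jn_zeros
      intro s hs
      obtain ⟨b, hb, rfl⟩ := List.mem_map.mp hs
      exact hGF a (List.mem_cons_self (a := a) (l := t)) b (List.mem_cons_of_mem a hb)
        (fun h => hct.1 (h ▸ hb))
    have ih' := ih hct.2
      (fun b hb c hc => hFG b (List.mem_cons_of_mem a hb) c (List.mem_cons_of_mem a hc))
      (fun b hb c hc => hGF b (List.mem_cons_of_mem a hb) c (List.mem_cons_of_mem a hc))
    calc jn ((a :: t).map F) ⋎ jn ((a :: t).map G)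
        = (F a ⋎ jn (t.map F)) ⋎ (G a ⋎ jn (t.map G)) := rfl
      _ = F a ⋎ ((jn (t.map F) ⋎ G a) ⋎ jn (t.map G)) := by
          rw [vee_assoc, vee_assoc]
      _ = F a ⋎ ((G a ⋎ jn (t.map F)) ⋎ jn (t.map G)) := by rw [Ocomm h1 h2]
      _ = (F a ⋎ G a) ⋎ (jn (t.map F) ⋎ jn (t.map G)) := by
          rw [vee_assoc, vee_assoc]
      _ = (F a ⋎ G a) ⋎ jn (t.map fun b => F b ⋎ G b) := by rw [ih']
      _ = jn ((a :: t).map fun b => F b ⋎ G b) := rfl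

/-! ### Step preservation lemmas -/

theorem sleq_step_meet {y z : S} (h : (y ⋏ z) ⋏ y = y) (w : S) :
    (((y ⋏ w) ⋏ y) ⋏ z) ⋏ ((y ⋏ w) ⋏ y) = (y ⋏ w) ⋏ y := by
  calc (((y ⋏ w) ⋏ y) ⋏ z) ⋏ ((y ⋏ w) ⋏ y)
      = (y ⋏ w) ⋏ (((y ⋏ z) ⋏ y) ⋏ (w ⋏ y)) := by simp only [wedge_assoc]
    _ = (y ⋏ w) ⋏ (y ⋏ (w ⋏ y)) := by rw [h]
    _ = ((y ⋏ w) ⋏ (y ⋏ w)) ⋏ y := by simp only [wedge_assoc]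
    _ = (y ⋏ w) ⋏ y := by rw [mi]

theorem sleq_step_diff {y z : S} (h : (y ⋏ z) ⋏ y = y) (w : S) :
    ((y ∖ w) ⋏ z) ⋏ (y ∖ w) = y ∖ w := by
  calc ((y ∖ w) ⋏ z) ⋏ (y ∖ w)
      = (((y ∖ w) ⋏ y) ⋏ z) ⋏ (y ⋏ (y ∖ w)) := by rw [dle1, dle2]
    _ = (y ∖ w) ⋏ (((y ⋏ z) ⋏ y) ⋏ (y ∖ w)) := by simp only [wedge_assoc]
    _ = (y ∖ w) ⋏ (y ⋏ (y ∖ w)) := by rw [h]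
    _ = (y ∖ w) ⋏ (y ∖ w) := by rw [dle2]
    _ = y ∖ w := mi _

theorem sleq_new_meet (y w : S) :
    ((((y ⋏ w) ⋏ y) ⋏ w) ⋏ ((y ⋏ w) ⋏ y)) = (y ⋏ w) ⋏ y := by
  calc (((y ⋏ w) ⋏ y) ⋏ w) ⋏ ((y ⋏ w) ⋏ y)
      = ((y ⋏ w) ⋏ (y ⋏ w)) ⋏ ((y ⋏ w) ⋏ y) := by simp only [wedge_assoc]
    _ = (y ⋏ w) ⋏ ((y ⋏ w) ⋏ y) := by rw [mi]
    _ = ((y ⋏ w) ⋏ (y ⋏ w)) ⋏ y := by simp only [wedge_assoc]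
    _ = (y ⋏ w) ⋏ y := by rw [mi]

theorem perp_step_meet1 {y z : S} (h1 : y ⋏ z = zero) (w : S) :
    ((y ⋏ w) ⋏ y) ⋏ z = zero := by
  calc ((y ⋏ w) ⋏ y) ⋏ z = (y ⋏ w) ⋏ (y ⋏ z) := by rw [wedge_assoc]
    _ = zero := by rw [h1, wedge_zero]

theorem perp_step_meet2 {y z : S} (h2 : z ⋏ y = zero) (w : S) :
    z ⋏ ((y ⋏ w) ⋏ y) = zero := by
  calc z ⋏ ((y ⋏ w) ⋏ y) = ((z ⋏ y) ⋏ w) ⋏ y := by simp only [wedge_assoc]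
    _ = zero := by rw [h2, zero_wedge, zero_wedge]

theorem perp_step_diff1 {y z : S} (h1 : y ⋏ z = zero) (w : S) :
    (y ∖ w) ⋏ z = zero := by
  calc (y ∖ w) ⋏ z = ((y ∖ w) ⋏ y) ⋏ z := by rw [dle1]
    _ = (y ∖ w) ⋏ (y ⋏ z) := by rw [wedge_assoc]
    _ = zero := by rw [h1, wedge_zero]

theorem perp_step_diff2 {y z : S} (h2 : z ⋏ y = zero) (w : S) :
    z ⋏ (y ∖ w) = zero := by
  calc z ⋏ (y ∖ w) = z ⋏ (y ⋏ (y ∖ w)) := by rw [dle2]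
    _ = (z ⋏ y) ⋏ (y ∖ w) := by rw [← wedge_assoc]
    _ = zero := by rw [h2, zero_wedge]

/-! ### Recursive pieces -/

variable {n : ℕ}

def pc (x : Fin n → S) : List (Fin n) → ((Fin n) → Bool) → S → S
  | [], _, y => y
  | i :: t, ν, y => pc x t ν (if ν i = true then (y ⋏ x i) ⋏ y else y ∖ x i)

def en : List (Fin n) → List ((Fin n) → Bool)
  | [] => [fun _ => false]
  | i :: t => ((en t).map fun ν => Function.update ν i true)
      ++ ((en t).map fun ν => Function.update ν i false)

theorem pc_ext (x : Fin n → S) : ∀ (l : List (Fin n)) (ν ν' : (Fin n) → Bool) (y : S),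
    (∀ j ∈ l, ν j = ν' j) → pc x l ν y = pc x l ν' y := by
  intro l
  induction l with
  | nil => intro ν ν' y _; rfl
  | cons i t ih =>
    intro ν ν' y h
    rw [pc, pc, h i (List.mem_cons_self (a := i) (l := t))]
    exact ih ν ν' _ fun j hj => h j (List.mem_cons_of_mem i hj)

theorem pc_zero (x : Fin n → S) : ∀ (l : List (Fin n)) (ν : (Fin n) → Bool),
    pc x l ν zero = zero := by
  intro l
  induction l with
  | nil => intro ν; rfl
  | cons i t ih =>
    intro ν
    rw [pc]
    by_cases h : ν i = true
    · rw [if_pos h, zero_wedge, zero_wedge, ih]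
    · rw [if_neg h, zero_diff, ih]

theorem pc_sleq (x : Fin n → S) : ∀ (l : List (Fin n)) (ν : (Fin n) → Bool) (y z : S),
    (y ⋏ z) ⋏ y = y → ((pc x l ν y) ⋏ z) ⋏ (pc x l ν y) = pc x l ν y := by
  intro l
  induction l with
  | nil => intro ν y z h; exact h
  | cons i t ih =>
    intro ν y z h
    rw [pc]
    by_cases hb : ν i = true
    · rw [if_pos hb]; exact ih ν _ z (sleq_step_meet h (x i))
    · rw [if_neg hb]; exact ih ν _ z (sleq_step_diff h (x i))

theorem pc_perp (x : Fin n → S) : ∀ (l : List (Fin n)) (ν : (Fin n) → Bool) (y z : S),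
    (y ⋏ z = zero ∧ z ⋏ y = zero) →
    (pc x l ν y) ⋏ z = zero ∧ z ⋏ (pc x l ν y) = zero := by
  intro l
  induction l with
  | nil => intro ν y z h; exact h
  | cons i t ih =>
    intro ν y z h
    rw [pc]
    by_cases hb : ν i = true
    · rw [if_pos hb]
      exact ih ν _ z ⟨perp_step_meet1 h.1 (x i), perp_step_meet2 h.2 (x i)⟩
    · rw [if_neg hb]
      exact ih ν _ z ⟨perp_step_diff1 h.1 (x i), perp_step_diff2 h.2 (x i)⟩

theorem pc_true (x : Fin n → S) : ∀ (l : List (Fin n)) (ν : (Fin n) → Bool) (y : S)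
    (i : Fin n), i ∈ l → ν i = true →
    ((pc x l ν y) ⋏ x i) ⋏ (pc x l ν y) = pc x l ν y := by
  intro l
  induction l with
  | nil => intro ν y i hi; cases hi
  | cons j t ih =>
    intro ν y i hi hν
    rcases List.mem_cons.mp hi with h | h
    · subst h
      rw [pc, if_pos hν]
      exact pc_sleq x t ν _ (x i) (sleq_new_meet y (x i))
    · rw [pc]
      exact ih ν _ i h hν

theorem pc_false (x : Fin n → S) : ∀ (l : List (Fin n)) (ν : (Fin n) → Bool) (y : S)
    (i : Fin n), i ∈ l → ν i = false →
    (pc x l ν y) ⋏ x i = zero ∧ x i ⋏ (pc x l ν y) = zero := by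
  intro l
  induction l with
  | nil => intro ν y i hi; cases hi
  | cons j t ih =>
    intro ν y i hi hν
    rcases List.mem_cons.mp hi with h | h
    · subst h
      rw [pc, if_neg (by simp [hν])]
      exact pc_perp x t ν _ (x i) ⟨K2 y (x i), K1 y (x i)⟩
    · rw [pc]
      exact ih ν _ i h hν

theorem en_out : ∀ (l : List (Fin n)) (i : Fin n), i ∉ l →
    ∀ ν ∈ en l, ν i = false := by
  intro l
  induction l with
  | nil =>
    intro i _ ν hν
    rw [en] at hν
    rcases List.mem_singleton.mp hν with rfl
    rfl
  | cons j t ih =>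
    intro i hi ν hν
    have hij : i ≠ j := fun h => hi (h ▸ List.mem_cons_self (a := j) (l := t))
    have hit : i ∉ t := fun h => hi (List.mem_cons_of_mem j h)
    rw [en] at hν
    rcases List.mem_append.mp hν with h | h <;>
    · obtain ⟨μ, hμ, rfl⟩ := List.mem_map.mp h
      rw [Function.update_of_ne hij]
      exact ih i hit μ hμ

theorem en_half_val {t : List (Fin n)} {i : Fin n} {b : Bool} {ν : (Fin n) → Bool}
    (h : ν ∈ (en t).map fun μ => Function.update μ i b) : ν i = b := by
  obtain ⟨μ, _, rfl⟩ := List.mem_map.mp h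
  exact Function.update_self i b μ

theorem en_nodup : ∀ (l : List (Fin n)), l.Nodup → (en l).Nodup := by
  intro l
  induction l with
  | nil => intro _; exact List.nodup_singleton _
  | cons i t ih =>
    intro hnd
    have hct := List.nodup_cons.mp hnd
    have hinj : ∀ (b : Bool), ∀ μ ∈ en t, ∀ μ' ∈ en t,
        Function.update μ i b = Function.update μ' i b → μ = μ' := by
      intro b μ hμ μ' hμ' h
      funext k
      by_cases hk : k = i
      · subst hk
        rw [en_out t k hct.1 μ hμ, en_out t k hct.1 μ' hμ']
      · have := congrFun h k
        rwa [Function.update_of_ne hk, Function.update_of_ne hk] at this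
    rw [en]
    refine List.Nodup.append ?_ ?_ ?_
    · exact (ih hct.2).map_on (hinj true)
    · exact (ih hct.2).map_on (hinj false)
    · intro ν h1 h2
      have e1 := en_half_val h1
      have e2 := en_half_val h2
      rw [e1] at e2
      cases e2

theorem rec_jn (x : Fin n → S) : ∀ (l : List (Fin n)), l.Nodup → ∀ y : S,
    jn ((en l).map fun ν => pc x l ν y) = y := by
  intro l
  induction l with
  | nil => intro _ y; simp [en, pc, jn, vee_zero]
  | cons i t ih =>
    intro hnd y
    have hct := List.nodup_cons.mp hnd
    rw [en, List.map_append, jn_append, List.map_map, List.map_map]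
    have htrue : ((en t).map ((fun ν => pc x (i :: t) ν y) ∘ fun ν => Function.update ν i true))
        = (en t).map fun ν => pc x t ν ((y ⋏ x i) ⋏ y) := by
      apply List.map_congr_left
      intro μ hμ
      show pc x (i :: t) (Function.update μ i true) y = _
      rw [pc, if_pos (Function.update_self i true μ)]
      apply pc_ext
      intro j hj
      exact Function.update_of_ne (ne_of_mem_of_not_mem hj hct.1) true μ
    have hfalse : ((en t).map ((fun ν => pc x (i :: t) ν y) ∘ fun ν => Function.update ν i false))
        = (en t).map fun ν => pc x t ν (y ∖ x i) := by
      apply List.map_congr_left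
      intro μ hμ
      show pc x (i :: t) (Function.update μ i false) y = _
      rw [pc, if_neg (by simp [Function.update_self])]
      apply pc_ext
      intro j hj
      exact Function.update_of_ne (ne_of_mem_of_not_mem hj hct.1) false μ
    rw [htrue, hfalse, ih hct.2, ih hct.2]
    exact diff_ax1 y (x i)

/-! ### Bricks and normal forms -/

def rr (x : Fin n → S) (ν : (Fin n) → Bool) (j : Fin n) : S :=
  pc x (List.finRange n) ν (x j)

theorem rr_zero (x : Fin n → S) {ν : (Fin n) → Bool} {j : Fin n} (hν : ν j = false) :
    rr x ν j = zero := by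
  have h1 := (pc_false x (List.finRange n) ν (x j) j (List.mem_finRange j) hν).1
  have h2 : (rr x ν j ⋏ x j) ⋏ rr x ν j = rr x ν j :=
    pc_sleq x _ ν (x j) (x j) (by rw [mi, mi])
  rw [show pc x (List.finRange n) ν (x j) = rr x ν j from rfl] at h1
  rw [h1, zero_wedge] at h2
  exact h2.symm

theorem rr_ortho (x : Fin n → S) {ν μ : (Fin n) → Bool} (hne : ν ≠ μ) (j k : Fin n) :
    rr x ν j ⋏ rr x μ k = zero := by
  obtain ⟨i, hi⟩ := Function.ne_iff.mp hne
  cases hb : ν i with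
  | true =>
    have hμ : μ i = false := by
      cases hc : μ i
      · rfl
      · exact absurd (hb.trans hc.symm) hi
    have hw : (rr x ν j ⋏ x i) ⋏ rr x ν j = rr x ν j :=
      pc_true x _ ν (x j) i (List.mem_finRange i) hb
    have hp := pc_false x (List.finRange n) μ (x k) i (List.mem_finRange i) hμ
    exact (DISJ hw hp.2 hp.1).2
  | false =>
    have hμ : μ i = true := by
      cases hc : μ i
      · exact absurd (hb.trans hc.symm) hi
      · rfl
    have hw : (rr x μ k ⋏ x i) ⋏ rr x μ k = rr x μ k :=
      pc_true x _ μ (x k) i (List.mem_finRange i) hμ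
    have hp := pc_false x (List.finRange n) ν (x j) i (List.mem_finRange i) hb
    exact (DISJ hw hp.2 hp.1).1

theorem rr_rec (x : Fin n → S) (j : Fin n) :
    jn ((en (List.finRange n)).map fun ν => rr x ν j) = x j :=
  rec_jn x _ (List.nodup_finRange n) (x j)

theorem rr_D (x : Fin n → S) {ν : (Fin n) → Bool} (hν : ν ∈ en (List.finRange n))
    {j k : Fin n} (hj : ν j = true) (hk : ν k = true) :
    (rr x ν j ⋏ rr x ν k) ⋏ rr x ν j = rr x ν j := by
  have h1 : (rr x ν j ⋏ x k) ⋏ rr x ν j = rr x ν j :=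
    pc_true x _ ν (x j) k (List.mem_finRange k) hk
  have h3 : (rr x ν j ⋏ x k) ⋏ rr x ν j
      = jn ((en (List.finRange n)).map fun μ => (rr x ν j ⋏ rr x μ k) ⋏ rr x ν j) := by
    rw [← rr_rec x k, wedge_jn, jn_wedge, List.map_map, List.map_map]
    rfl
  have h4 : jn ((en (List.finRange n)).map fun μ => (rr x ν j ⋏ rr x μ k) ⋏ rr x ν j)
      = (rr x ν j ⋏ rr x ν k) ⋏ rr x ν j := by
    apply jn_single _ (en_nodup _ (List.nodup_finRange n)) hν
    intro μ hμ hne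
    rw [rr_ortho x (Ne.symm hne), zero_wedge]
  rw [h3, h4] at h1
  exact h1

theorem quad (x : Fin n → S) {ν : (Fin n) → Bool} (hν : ν ∈ en (List.finRange n))
    {j k j' k' : Fin n} (hj : ν j = true) (hk : ν k = true)
    (hj' : ν j' = true) (hk' : ν k' = true) :
    (rr x ν j ⋏ rr x ν k) ⋏ (rr x ν j' ⋏ rr x ν k') = rr x ν j ⋏ rr x ν k' := by
  have e1 : (rr x ν j ⋏ rr x ν k) ⋏ rr x ν j' = rr x ν j ⋏ rr x ν j' :=
    rect3 (rr_D x hν hj hk) (rr_D x hν hj hj') (rr_D x hν hj' hj)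
  have e2 : (rr x ν j ⋏ rr x ν j') ⋏ rr x ν k' = rr x ν j ⋏ rr x ν k' :=
    rect3 (rr_D x hν hj hj') (rr_D x hν hj hk') (rr_D x hν hk' hj)
  calc (rr x ν j ⋏ rr x ν k) ⋏ (rr x ν j' ⋏ rr x ν k')
      = ((rr x ν j ⋏ rr x ν k) ⋏ rr x ν j') ⋏ rr x ν k' := by rw [← wedge_assoc]
    _ = rr x ν j ⋏ rr x ν k' := by rw [e1, e2]

theorem wD (x : Fin n → S) {ν : (Fin n) → Bool} (hν : ν ∈ en (List.finRange n))
    {j k j' k' : Fin n} (hj : ν j = true) (hk : ν k = true)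
    (hj' : ν j' = true) (hk' : ν k' = true) :
    ((rr x ν j ⋏ rr x ν k) ⋏ (rr x ν j' ⋏ rr x ν k')) ⋏ (rr x ν j ⋏ rr x ν k)
      = rr x ν j ⋏ rr x ν k := by
  rw [quad x hν hj hk hj' hk', quad x hν hj hk' hj hk]

/-! ### Normal form functions -/

def omeet : Option (Fin n × Fin n) → Option (Fin n × Fin n) → Option (Fin n × Fin n)
  | some p, some q => some (p.1, q.2)
  | _, _ => none

def ojoin : Option (Fin n × Fin n) → Option (Fin n × Fin n) → Option (Fin n × Fin n)
  | some p, some q => some (q.1, p.2)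
  | some p, none => some p
  | none, q => q

def odiff : Option (Fin n × Fin n) → Option (Fin n × Fin n) → Option (Fin n × Fin n)
  | o, none => o
  | _, some _ => none

def mNF (f g : ((Fin n) → Bool) → Option (Fin n × Fin n)) :
    ((Fin n) → Bool) → Option (Fin n × Fin n) := fun μ => omeet (f μ) (g μ)

def jNF (f g : ((Fin n) → Bool) → Option (Fin n × Fin n)) :
    ((Fin n) → Bool) → Option (Fin n × Fin n) := fun μ => ojoin (f μ) (g μ)

def dNF (f g : ((Fin n) → Bool) → Option (Fin n × Fin n)) :
    ((Fin n) → Bool) → Option (Fin n × Fin n) := fun μ => odiff (f μ) (g μ)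

def term (x : Fin n → S) (f : ((Fin n) → Bool) → Option (Fin n × Fin n))
    (ν : (Fin n) → Bool) : S :=
  (f ν).elim zero fun p => rr x ν p.1 ⋏ rr x ν p.2

def ev (x : Fin n → S) (f : ((Fin n) → Bool) → Option (Fin n × Fin n)) : S :=
  jn ((en (List.finRange n)).map (term x f))

def Valid (f : ((Fin n) → Bool) → Option (Fin n × Fin n)) : Prop :=
  ∀ ν p, f ν = some p → ν p.1 = true ∧ ν p.2 = true

theorem valid_meet {f g : ((Fin n) → Bool) → Option (Fin n × Fin n)}
    (hf : Valid f) (hg : Valid g) : Valid (mNF f g) := by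
  intro ν p h
  change omeet (f ν) (g ν) = some p at h
  cases hfν : f ν with
  | none => rw [hfν] at h; simp [omeet] at h
  | some a =>
    cases hgν : g ν with
    | none => rw [hfν, hgν] at h; simp [omeet] at h
    | some b =>
      rw [hfν, hgν] at h
      simp only [omeet] at h
      rcases Option.some.inj h with rfl
      exact ⟨(hf ν a hfν).1, (hg ν b hgν).2⟩

theorem valid_join {f g : ((Fin n) → Bool) → Option (Fin n × Fin n)}
    (hf : Valid f) (hg : Valid g) : Valid (jNF f g) := by
  intro ν p h
  change ojoin (f ν) (g ν) = some p at h
  cases hfν : f ν with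
  | none =>
    rw [hfν] at h
    simp only [ojoin] at h
    exact hg ν p h
  | some a =>
    cases hgν : g ν with
    | none =>
      rw [hfν, hgν] at h
      simp only [ojoin] at h
      rcases Option.some.inj h with rfl
      exact hf ν a hfν
    | some b =>
      rw [hfν, hgν] at h
      simp only [ojoin] at h
      rcases Option.some.inj h with rfl
      exact ⟨(hg ν b hgν).1, (hf ν a hfν).2⟩

theorem valid_diff {f g : ((Fin n) → Bool) → Option (Fin n × Fin n)}
    (hf : Valid f) (hg : Valid g) : Valid (dNF f g) := by
  intro ν p h
  change odiff (f ν) (g ν) = some p at h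
  cases hgν : g ν with
  | none =>
    rw [hgν] at h
    simp only [odiff] at h
    exact hf ν p h
  | some b => rw [hgν] at h; simp [odiff] at h

theorem valid_gen (j : Fin n) :
    Valid (fun ν : (Fin n) → Bool => if ν j = true then some (j, j) else none) := by
  intro ν p h
  change (if ν j = true then some (j, j) else none) = some p at h
  by_cases hb : ν j = true
  · rw [if_pos hb] at h
    rcases Option.some.inj h with rfl
    exact ⟨hb, hb⟩
  · rw [if_neg hb] at h
    cases h

theorem valid_none : Valid (fun _ : (Fin n) → Bool => (none : Option (Fin n × Fin n))) := by
  intro ν p h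
  cases h

/-! ### Evaluation lemmas -/

theorem term_ortho (x : Fin n → S) (f g : ((Fin n) → Bool) → Option (Fin n × Fin n))
    {ν μ : (Fin n) → Bool} (hne : ν ≠ μ) : term x f ν ⋏ term x g μ = zero := by
  cases hfν : f ν with
  | none => simp [term, hfν, zero_wedge]
  | some p =>
    cases hgμ : g μ with
    | none => simp [term, hfν, hgμ, wedge_zero]
    | some q =>
      simp only [term, hfν, hgμ, Option.elim_some]
      calc (rr x ν p.1 ⋏ rr x ν p.2) ⋏ (rr x μ q.1 ⋏ rr x μ q.2)
          = rr x ν p.1 ⋏ ((rr x ν p.2 ⋏ rr x μ q.1) ⋏ rr x μ q.2) := by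
            simp only [wedge_assoc]
        _ = zero := by rw [rr_ortho x hne, zero_wedge, wedge_zero]

theorem term_meet (x : Fin n → S) {f g : ((Fin n) → Bool) → Option (Fin n × Fin n)}
    (hf : Valid f) (hg : Valid g) {ν : (Fin n) → Bool} (hν : ν ∈ en (List.finRange n)) :
    term x f ν ⋏ term x g ν = term x (mNF f g) ν := by
  cases hfν : f ν with
  | none =>
    cases hgν : g ν <;> simp [term, mNF, omeet, hfν, hgν, zero_wedge]
  | some p =>
    cases hgν : g ν with
    | none => simp [term, mNF, omeet, hfν, hgν, wedge_zero]
    | some q =>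
      obtain ⟨hp1, hp2⟩ := hf ν p hfν
      obtain ⟨hq1, hq2⟩ := hg ν q hgν
      simp only [term, mNF, omeet, hfν, hgν, Option.elim_some]
      exact quad x hν hp1 hp2 hq1 hq2

theorem term_join (x : Fin n → S) {f g : ((Fin n) → Bool) → Option (Fin n × Fin n)}
    (hf : Valid f) (hg : Valid g) {ν : (Fin n) → Bool} (hν : ν ∈ en (List.finRange n)) :
    term x f ν ⋎ term x g ν = term x (jNF f g) ν := by
  cases hfν : f ν with
  | none =>
    cases hgν : g ν <;> simp [term, jNF, ojoin, hfν, hgν, zero_vee]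
  | some p =>
    cases hgν : g ν with
    | none => simp [term, jNF, ojoin, hfν, hgν, vee_zero]
    | some q =>
      obtain ⟨hp1, hp2⟩ := hf ν p hfν
      obtain ⟨hq1, hq2⟩ := hg ν q hgν
      simp only [term, jNF, ojoin, hfν, hgν, Option.elim_some]
      have hJ := Jlem (wD x hν hp1 hp2 hq1 hq2) (wD x hν hq1 hq2 hp1 hp2)
      rw [hJ]
      exact quad x hν hq1 hq2 hp1 hp2

theorem ev_meet (x : Fin n → S) {f g : ((Fin n) → Bool) → Option (Fin n × Fin n)}
    (hf : Valid f) (hg : Valid g) : ev x f ⋏ ev x g = ev x (mNF f g) := by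
  unfold ev
  rw [jn_map_wedge (en_nodup _ (List.nodup_finRange n)) _ _
      (fun a _ b _ hne => term_ortho x f g hne)]
  congr 1
  apply List.map_congr_left
  intro ν hν
  exact term_meet x hf hg hν

theorem ev_join (x : Fin n → S) {f g : ((Fin n) → Bool) → Option (Fin n × Fin n)}
    (hf : Valid f) (hg : Valid g) : ev x f ⋎ ev x g = ev x (jNF f g) := by
  unfold ev
  rw [jn_map_vee (en_nodup _ (List.nodup_finRange n)) _ _
      (fun a _ b _ hne => term_ortho x f g hne)
      (fun a _ b _ hne => term_ortho x g f hne)]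
  congr 1
  apply List.map_congr_left
  intro ν hν
  exact term_join x hf hg hν

theorem ev_congr (x : Fin n → S) {f g : ((Fin n) → Bool) → Option (Fin n × Fin n)}
    (h : ∀ ν, f ν = g ν) : ev x f = ev x g := by
  unfold ev
  congr 1
  apply List.map_congr_left
  intro ν _
  unfold term
  rw [h ν]

theorem ev_zero (x : Fin n → S) :
    ev x (fun _ => (none : Option (Fin n × Fin n))) = zero := by
  unfold ev
  apply jn_zeros
  intro s hs
  obtain ⟨ν, _, rfl⟩ := List.mem_map.mp hs
  rfl

theorem ev_gen (x : Fin n → S) (j : Fin n) :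
    ev x (fun ν => if ν j = true then some (j, j) else none) = x j := by
  unfold ev
  have h : ∀ ν ∈ en (List.finRange n),
      term x (fun ν => if ν j = true then some (j, j) else none) ν
        = pc x (List.finRange n) ν (x j) := by
    intro ν _
    by_cases hb : ν j = true
    · show ((if ν j = true then some (j, j) else none).elim zero
        fun p => rr x ν p.1 ⋏ rr x ν p.2) = _
      rw [if_pos hb]
      exact mi _
    · show ((if ν j = true then some (j, j) else none).elim zero
        fun p => rr x ν p.1 ⋏ rr x ν p.2) = _
      rw [if_neg hb]
      have hb' : ν j = false := by
        cases hc : ν j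
        · rfl
        · exact absurd hc hb
      exact (rr_zero x hb').symm
  rw [List.map_congr_left h]
  exact rec_jn x _ (List.nodup_finRange n) (x j)

theorem ev_diff (x : Fin n → S) {f g : ((Fin n) → Bool) → Option (Fin n × Fin n)}
    (hf : Valid f) (hg : Valid g) : ev x f ∖ ev x g = ev x (dNF f g) := by
  apply diff_eq_of
  · calc ((ev x f ⋏ ev x g) ⋏ ev x f) ⋎ ev x (dNF f g)
        = (ev x (mNF f g) ⋏ ev x f) ⋎ ev x (dNF f g) := by rw [ev_meet x hf hg]
      _ = ev x (mNF (mNF f g) f) ⋎ ev x (dNF f g) := by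
          rw [ev_meet x (valid_meet hf hg) hf]
      _ = ev x (jNF (mNF (mNF f g) f) (dNF f g)) :=
          ev_join x (valid_meet (valid_meet hf hg) hf) (valid_diff hf hg)
      _ = ev x f := by
          apply ev_congr
          intro ν
          cases hfν : f ν <;> cases hgν : g ν <;>
            simp [jNF, mNF, dNF, omeet, ojoin, odiff, hfν, hgν]
  · calc ((ev x f ⋏ ev x g) ⋏ ev x f) ⋏ ev x (dNF f g)
        = ev x (mNF (mNF (mNF f g) f) (dNF f g)) := by
          rw [ev_meet x hf hg, ev_meet x (valid_meet hf hg) hf,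
            ev_meet x (valid_meet (valid_meet hf hg) hf) (valid_diff hf hg)]
      _ = ev x (fun _ => none) := by
          apply ev_congr
          intro ν
          cases hfν : f ν <;> cases hgν : g ν <;>
            simp [mNF, dNF, omeet, odiff, hfν, hgν]
      _ = zero := ev_zero x

end SBAFin

theorem stmt1 (S : Type u) [SBA S] (X : Set S) (hX : X.Finite)
    (hgen : Generates X) : Finite S := by
  classical
  let l : List S := hX.toFinset.toList
  let n : ℕ := l.length
  let x : Fin n → S := l.get
  let T : Set S := (SBAFin.ev x) '' {f | SBAFin.Valid f}
  have hsub : X ⊆ T := by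
    intro a ha
    have hmem : a ∈ l := by
      rw [Finset.mem_toList, Set.Finite.mem_toFinset]
      exact ha
    obtain ⟨i, hi⟩ := List.mem_iff_get.mp hmem
    exact ⟨fun ν => if ν i = true then some (i, i) else none, SBAFin.valid_gen i,
      by rw [SBAFin.ev_gen x i]; exact hi⟩
  have hzero : zero ∈ T :=
    ⟨fun _ => none, SBAFin.valid_none, SBAFin.ev_zero x⟩
  have hops : ∀ a b : S, a ∈ T → b ∈ T → a ⋏ b ∈ T ∧ a ⋎ b ∈ T ∧ a ∖ b ∈ T := by
    rintro a b ⟨f, hf, rfl⟩ ⟨g, hg, rfl⟩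
    exact ⟨⟨SBAFin.mNF f g, SBAFin.valid_meet hf hg, (SBAFin.ev_meet x hf hg).symm⟩,
      ⟨SBAFin.jNF f g, SBAFin.valid_join hf hg, (SBAFin.ev_join x hf hg).symm⟩,
      ⟨SBAFin.dNF f g, SBAFin.valid_diff hf hg, (SBAFin.ev_diff x hf hg).symm⟩⟩
  have hT := hgen T hsub hzero hops
  have hfin : T.Finite := Set.Finite.image _ (Set.toFinite _)
  rw [hT] at hfin
  exact Set.finite_univ_iff.mp hfin
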